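/- There is no Type-n vector field on S²×S¹: if P₁, P₂, P₃, P₄ ∈ ℝ[x₁,x₂,x₃,x₄] are homogeneous polynomials of the same degree n and χ = (P₁,P₂,P₃,P₄) is a vector field on S²×S¹, then P₄ = 0. In particular, there is no vector field on S²×S¹ all four of whose components are nonzero homogeneous polynomials of degree n. -/

import Mathlib

open MvPolynomial

/-- The action of the polynomial vector field `χ = (P 0, P 1, P 2, P 3)` on a polynomial:
`χf = Σᵢ Pᵢ ∂f/∂xᵢ`. -/
noncomputable def chi (P : Fin 4 → MvPolynomial (Fin 4) ℝ)
    (f : MvPolynomial (Fin 4) ℝ) : MvPolynomial (Fin 4) ℝ :=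
  ∑ i, P i * pderiv i f

/-- `G_b = (x₁² + x₂² + x₃² - b²)² + x₄² - 1`, whose zero set is `S² × S¹`. -/
noncomputable def Gb (b : ℝ) : MvPolynomial (Fin 4) ℝ :=
  (X 0 ^ 2 + X 1 ^ 2 + X 2 ^ 2 - C (b ^ 2)) ^ 2 + X 3 ^ 2 - 1

noncomputable def Tmap : MvPolynomial (Fin 4) ℝ →ₐ[ℝ] Polynomial (MvPolynomial (Fin 4) ℝ) :=
  aeval (fun i => Polynomial.C (X i) * Polynomial.X)
lemma Tmap_monomial (d : Fin 4 →₀ ℕ) (c : ℝ) :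
    Tmap (monomial d c) = Polynomial.C (monomial d c) * Polynomial.X ^ (d.degree) := by
  rw [Tmap, aeval_monomial]
  have h1 : (d.prod fun i k => (Polynomial.C (X i : MvPolynomial (Fin 4) ℝ) * Polynomial.X) ^ k)
      = Polynomial.C (d.prod fun i k => (X i : MvPolynomial (Fin 4) ℝ) ^ k)
        * Polynomial.X ^ (d.degree) := by
    rw [Finsupp.prod, Finsupp.prod, Finsupp.degree]
    simp_rw [mul_pow, ← Polynomial.C_pow]
    rw [Finset.prod_mul_distrib, ← map_prod, Finset.prod_pow_eq_pow_sum]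
    rfl
  rw [h1, monomial_eq]
  simp [mul_comm, mul_assoc, mul_left_comm, Polynomial.algebraMap_apply, algebraMap_eq]
lemma Tmap_homog {f : MvPolynomial (Fin 4) ℝ} {m : ℕ} (hf : f.IsHomogeneous m) :
    Tmap f = Polynomial.C f * Polynomial.X ^ m := by
  conv_lhs => rw [f.as_sum]
  rw [map_sum]
  conv_rhs => rw [f.as_sum]
  rw [map_sum, Finset.sum_mul]
  refine Finset.sum_congr rfl fun d hd => ?_
  rw [Tmap_monomial]
  congr 1
  have := hf (mem_support_iff.mp hd)
  change Finsupp.weight (fun _ => 1) d = m at this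
  rw [← Finsupp.degree_eq_weight_one] at this
  rw [this]
lemma Tmap_C (c : ℝ) : Tmap (C c) = Polynomial.C (C c) := by
  simp [Tmap, algebraMap_eq, Polynomial.algebraMap_apply]

lemma chi_Gb (b : ℝ) (P : Fin 4 → MvPolynomial (Fin 4) ℝ) :
    chi P (Gb b) = 4 * (X 0 ^ 2 + X 1 ^ 2 + X 2 ^ 2 - C (b ^ 2))
      * (X 0 * P 0 + X 1 * P 1 + X 2 * P 2) + 2 * X 3 * P 3 := by
  simp only [chi, Gb, Fin.sum_univ_four]
  simp [Derivation.leibniz_pow, pderiv_X_self, pderiv_X_of_ne, pderiv_C]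
  ring

lemma key (b : ℝ) (hb : 1 < b) (n : ℕ) (P : Fin 4 → MvPolynomial (Fin 4) ℝ)
    (hP : ∀ i, (P i).IsHomogeneous n)
    (K : MvPolynomial (Fin 4) ℝ) (hK : chi P (Gb b) = K * Gb b) : P 3 = 0 := by
  set s : MvPolynomial (Fin 4) ℝ := X 0 ^ 2 + X 1 ^ 2 + X 2 ^ 2 with hs_def
  set Q : MvPolynomial (Fin 4) ℝ := X 0 * P 0 + X 1 * P 1 + X 2 * P 2 with hQ_def
  -- nonzeroness facts
  have hs0 : s ≠ 0 := by
    intro h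
    have := congrArg (eval fun _ : Fin 4 => (1:ℝ)) h
    simp [hs_def] at this
    norm_num at this
  have hX3 : (X 3 : MvPolynomial (Fin 4) ℝ) ≠ 0 := by
    intro h
    have := congrArg (eval fun _ : Fin 4 => (1:ℝ)) h
    simp at this
  have h4 : (4 : MvPolynomial (Fin 4) ℝ) ≠ 0 := by
    intro h
    have := congrArg (eval fun _ : Fin 4 => (1:ℝ)) h
    simp at this
  have h2' : (2 : MvPolynomial (Fin 4) ℝ) ≠ 0 := by
    intro h
    have := congrArg (eval fun _ : Fin 4 => (1:ℝ)) h
    simp at this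
  have hs_ne : (4 : MvPolynomial (Fin 4) ℝ) * s ≠ 0 := mul_ne_zero h4 hs0
  have hx3_ne : (2 : MvPolynomial (Fin 4) ℝ) * X 3 ≠ 0 := mul_ne_zero h2' hX3
  have hb4 : (C (b ^ 2) : MvPolynomial (Fin 4) ℝ) ^ 2 - 1 ≠ 0 := by
    intro h
    have := congrArg (eval fun _ : Fin 4 => (1:ℝ)) h
    simp at this
    nlinarith [this, hb, sq_nonneg (b-1), sq_nonneg (b+1), sq_nonneg (b^2-1)]
  -- homogeneity
  have hs : s.IsHomogeneous 2 := by
    have h1 : ((X 0 : MvPolynomial (Fin 4) ℝ) ^ 2).IsHomogeneous 2 := by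
      simpa using (isHomogeneous_X ℝ (0 : Fin 4)).pow 2
    have h2 : ((X 1 : MvPolynomial (Fin 4) ℝ) ^ 2).IsHomogeneous 2 := by
      simpa using (isHomogeneous_X ℝ (1 : Fin 4)).pow 2
    have h3 : ((X 2 : MvPolynomial (Fin 4) ℝ) ^ 2).IsHomogeneous 2 := by
      simpa using (isHomogeneous_X ℝ (2 : Fin 4)).pow 2
    exact (h1.add h2).add h3
  have hQ : Q.IsHomogeneous (1 + n) :=
    (((isHomogeneous_X ℝ (0 : Fin 4)).mul (hP 0)).add
      ((isHomogeneous_X ℝ (1 : Fin 4)).mul (hP 1))).add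
      ((isHomogeneous_X ℝ (2 : Fin 4)).mul (hP 2))
  -- apply Tmap to the identity
  have h1 : 4 * (s - C (b ^ 2)) * Q + 2 * X 3 * P 3 = K * Gb b := by
    rw [← chi_Gb]; exact hK
  have h2 := congrArg Tmap h1
  rw [Gb, ← hs_def] at h2
  simp only [map_add, map_sub, map_mul, map_one, map_pow, map_ofNat,
    Tmap_homog hs, Tmap_homog hQ, Tmap_homog (hP 3),
    Tmap_homog (isHomogeneous_X ℝ (3 : Fin 4)), Tmap_C] at h2
  set k := Tmap K with hk_def
  set g : Polynomial (MvPolynomial (Fin 4) ℝ) := Polynomial.C (s ^ 2) * Polynomial.X ^ 4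
        + Polynomial.C (X 3 ^ 2 - 2 * C (b ^ 2) * s) * Polynomial.X ^ 2
        + (Polynomial.C (C (b ^ 2) ^ 2 - 1)) with hg_def
  set h : Polynomial (MvPolynomial (Fin 4) ℝ) := Polynomial.C (4 * s * Q) * Polynomial.X ^ 2
        + Polynomial.C (2 * X 3 * P 3 - 4 * C (b ^ 2) * Q) with hh_def
  have hid : Polynomial.X ^ (n + 1) * h = k * g := by
    rw [hh_def, hg_def]
    simp only [map_mul, map_sub, map_pow, map_one, map_ofNat]
    linear_combination h2
  have hh2 : h.coeff 2 = 4 * s * Q := by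
    rw [hh_def, Polynomial.coeff_add, Polynomial.coeff_C_mul, Polynomial.coeff_X_pow,
      Polynomial.coeff_C]
    norm_num
  have hh0 : h.coeff 0 = 2 * X 3 * P 3 - 4 * C (b ^ 2) * Q := by
    rw [hh_def, Polynomial.coeff_add, Polynomial.coeff_C_mul, Polynomial.coeff_X_pow,
      Polynomial.coeff_C]
    norm_num
  have hg_coeff0 : g.coeff 0 = C (b ^ 2) ^ 2 - 1 := by
    rw [hg_def, Polynomial.coeff_add, Polynomial.coeff_add, Polynomial.coeff_C_mul,
      Polynomial.coeff_C_mul, Polynomial.coeff_X_pow, Polynomial.coeff_X_pow, Polynomial.coeff_C]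
    norm_num
  have hg_coeff4 : g.coeff 4 = s ^ 2 := by
    rw [hg_def, Polynomial.coeff_add, Polynomial.coeff_add, Polynomial.coeff_C_mul,
      Polynomial.coeff_C_mul, Polynomial.coeff_X_pow, Polynomial.coeff_X_pow, Polynomial.coeff_C]
    norm_num
  have hg_ne : g ≠ 0 := fun h0 => hb4 (by rw [← hg_coeff0, h0, Polynomial.coeff_zero])
  by_cases hk : k = 0
  · -- K maps to zero: the left side is zero, extract coefficients
    rw [hk, zero_mul] at hid
    have hc3 : h.coeff 2 = 0 := by
      rw [← Polynomial.coeff_X_pow_mul h (n + 1) 2, hid, Polynomial.coeff_zero]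
    have hc1 : h.coeff 0 = 0 := by
      rw [← Polynomial.coeff_X_pow_mul h (n + 1) 0, hid, Polynomial.coeff_zero]
    rw [hh2] at hc3
    rw [hh0] at hc1
    have hQ0 : Q = 0 := by
      rcases mul_eq_zero.mp (show (4 * s) * Q = 0 by linear_combination hc3) with h' | h'
      · exact absurd h' hs_ne
      · exact h'
    have hfin : (2 * X 3) * P 3 = 0 := by
      rw [hQ0] at hc1; linear_combination hc1
    rcases mul_eq_zero.mp hfin with h' | h'
    · exact absurd h' hx3_ne
    · exact h'
  · -- K nonzero: degree contradiction
    exfalso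
    have hkg_ne : k * g ≠ 0 := mul_ne_zero hk hg_ne
    have hh_ne : h ≠ 0 := by
      intro h0
      rw [← hid, h0, mul_zero] at hkg_ne
      exact hkg_ne rfl
    have hXn : (Polynomial.X : Polynomial (MvPolynomial (Fin 4) ℝ)) ^ (n + 1) ≠ 0 :=
      pow_ne_zero _ Polynomial.X_ne_zero
    have hgdeg : g.natDegree = 4 := by
      have hle : g.natDegree ≤ 4 := by
        rw [hg_def]
        refine le_trans (Polynomial.natDegree_add_le _ _) ?_
        rw [max_le_iff]
        refine ⟨le_trans (Polynomial.natDegree_add_le _ _) ?_, ?_⟩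
        · rw [max_le_iff]
          constructor <;> refine le_trans Polynomial.natDegree_mul_le ?_ <;>
            simp only [Polynomial.natDegree_C, Polynomial.natDegree_X_pow] <;> omega
        · simp only [Polynomial.natDegree_C]; omega
      have hge : 4 ≤ g.natDegree := by
        apply Polynomial.le_natDegree_of_ne_zero
        rw [hg_coeff4]
        exact pow_ne_zero _ hs0
      omega
    have hgtr : g.natTrailingDegree = 0 := by
      have := Polynomial.natTrailingDegree_le_of_ne_zero (n := 0) (by rw [hg_coeff0]; exact hb4)
      omega
    have hhdeg : h.natDegree ≤ 2 := by
      rw [hh_def]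
      refine le_trans (Polynomial.natDegree_add_le _ _) ?_
      rw [max_le_iff]
      refine ⟨le_trans Polynomial.natDegree_mul_le ?_, ?_⟩ <;>
        simp only [Polynomial.natDegree_C, Polynomial.natDegree_X_pow] <;> omega
    have hd : (n + 1) + h.natDegree = k.natDegree + 4 := by
      rw [← Polynomial.natDegree_X_pow (R := MvPolynomial (Fin 4) ℝ) (n + 1),
        ← Polynomial.natDegree_mul hXn hh_ne, hid, Polynomial.natDegree_mul hk hg_ne, hgdeg]
    have ht : (n + 1) + h.natTrailingDegree = k.natTrailingDegree := by
      rw [← Polynomial.natTrailingDegree_X_pow (R := MvPolynomial (Fin 4) ℝ) (n + 1),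
        ← Polynomial.natTrailingDegree_mul hXn hh_ne, hid,
        Polynomial.natTrailingDegree_mul hk hg_ne, hgtr, add_zero]
    have := Polynomial.natTrailingDegree_le_natDegree k
    omega

theorem stmt_16 (b : ℝ) (hb : 1 < b) (n : ℕ) :
    (∀ P : Fin 4 → MvPolynomial (Fin 4) ℝ, (∀ i, (P i).IsHomogeneous n) →
      (∃ K : MvPolynomial (Fin 4) ℝ, chi P (Gb b) = K * Gb b) → P 3 = 0) ∧
    ¬ ∃ P : Fin 4 → MvPolynomial (Fin 4) ℝ,
      (∀ i, (P i).IsHomogeneous n) ∧ (∀ i, P i ≠ 0) ∧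
      ∃ K : MvPolynomial (Fin 4) ℝ, chi P (Gb b) = K * Gb b := by
  constructor
  · rintro P hP ⟨K, hK⟩
    exact key b hb n P hP K hK
  · rintro ⟨P, hP, hne, K, hK⟩
    exact hne 3 (key b hb n P hP K hK)
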